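/- For every bi-infinite sequence α = (α_n)_{n∈ℤ} with α_n ∈ {1,2} for all n, and all integers j ≥ 1 and k ≥ 1, the following lower bound holds: λ₀(α) ≥ [α₀; α₁, …, α_j, S(j)] + [0; α_{−1}, …, α_{−k}, S(k)], where S(n) denotes the periodic tail 2,1,2,1,2,1,… if n is even, and the periodic tail 1,2,1,2,1,2,… if n is odd. Explicitly: if k and j are both even, λ₀(α) ≥ [α₀; α₁, …, α_j, \overline{2,1}] + [0; α_{−1}, …, α_{−k}, \overline{2,1}]; if k is even and j is odd, λ₀(α) ≥ [α₀; α₁, …, α_j, \overline{1,2}] + [0; α_{−1}, …, α_{−k}, \overline{2,1}]; if k is odd and j is even, λ₀(α) ≥ [α₀; α₁, …, α_j, \overline{2,1}] + [0; α_{−1}, …, α_{−k}, \overline{1,2}]; if k and j are both odd, λ₀(α) ≥ [α₀; α₁, …, α_j, \overline{1,2}] + [0; α_{−1}, …, α_{−k}, \overline{1,2}]. -/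
import Mathlib


open Filter Set MeasureTheory
open scoped ENNReal Topology

/-- Finite continued fraction `[a 0; a 1, ..., a n]`. -/
noncomputable def cfConv : (ℕ → ℝ) → ℕ → ℝ
  | a, 0 => a 0
  | a, n + 1 => a 0 + 1 / cfConv (fun i => a (i + 1)) n

/-- Value of the infinite continued fraction `[a 0; a 1, a 2, ...]`,
as the limit of its convergents. -/
noncomputable def cfVal (a : ℕ → ℝ) : ℝ := limUnder atTop (cfConv a)

/-- `λ_k(α) = [α_k; α_{k+1}, ...] + [0; α_{k-1}, α_{k-2}, ...]`. -/
noncomputable def lambdaVal (α : ℤ → ℕ) (k : ℤ) : ℝ :=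
  cfVal (fun n => (α (k + n) : ℝ)) +
  cfVal (fun n => if n = 0 then 0 else (α (k - n) : ℝ))

/-- The Markov value `m(α) = sup_{k ∈ ℤ} λ_k(α)`. -/
noncomputable def markovValue (α : ℤ → ℕ) : ℝ := ⨆ k : ℤ, lambdaVal α k

/-- The Markov spectrum. -/
def markovSpectrum : Set ℝ :=
  { x | ∃ α : ℤ → ℕ, (∀ n, 0 < α n) ∧ BddAbove (range (lambdaVal α)) ∧
      markovValue α = x }

/-- The dimension function `d(t) = dim_H (M ∩ (-∞, t))`. -/
noncomputable def dimFun (t : ℝ) : ℝ≥0∞ := dimH (markovSpectrum ∩ Iio t)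

/-- `[a 0; a 1, …, a j, \overline{b₁, b₂}]` : the infinite continued fraction
keeping the entries of `a` up to index `j` and with eventually periodic tail
alternating `b₁, b₂, b₁, b₂, …` from position `j + 1` on. -/
noncomputable def tailCF (a : ℕ → ℝ) (j : ℕ) (b₁ b₂ : ℝ) : ℝ :=
  cfVal (fun n => if n ≤ j then a n else if (n - j) % 2 = 1 then b₁ else b₂)

/-! ### Auxiliary lemmas -/

lemma cfConv_zero (a : ℕ → ℝ) : cfConv a 0 = a 0 := rfl

lemma cfConv_succ (a : ℕ → ℝ) (n : ℕ) :
    cfConv a (n + 1) = a 0 + 1 / cfConv (fun i => a (i + 1)) n := rfl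

/-- A "good" sequence: entries bounded by `2`, at least `1` away from index `0`,
nonnegative at index `0`. -/
def GoodCF (a : ℕ → ℝ) : Prop :=
  0 ≤ a 0 ∧ (∀ i, a i ≤ 2) ∧ (∀ i, i ≠ 0 → 1 ≤ a i)

lemma one_le_cfConv {a : ℕ → ℝ} (ha : ∀ i, 1 ≤ a i) : ∀ n, 1 ≤ cfConv a n := by
  intro n
  induction n generalizing a with
  | zero => exact ha 0
  | succ n ih =>
    have h1 : 1 ≤ cfConv (fun i => a (i + 1)) n := ih (fun i => ha (i + 1))
    have h2 : 0 < 1 / cfConv (fun i => a (i + 1)) n := by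
      apply one_div_pos.mpr; linarith
    rw [cfConv_succ]
    have := ha 0
    linarith

lemma cfConv_nonneg {a : ℕ → ℝ} (h0 : 0 ≤ a 0) (h1 : ∀ i, i ≠ 0 → 1 ≤ a i) (n : ℕ) :
    0 ≤ cfConv a n := by
  cases n with
  | zero => exact h0
  | succ n =>
    rw [cfConv_succ]
    have hx : 1 ≤ cfConv (fun i => a (i + 1)) n :=
      one_le_cfConv (fun i => h1 (i + 1) (by omega)) n
    have : 0 < 1 / cfConv (fun i => a (i + 1)) n := by
      apply one_div_pos.mpr; linarith
    linarith

lemma cfConv_le_three {a : ℕ → ℝ} (h2 : ∀ i, a i ≤ 2) (h1 : ∀ i, i ≠ 0 → 1 ≤ a i) (n : ℕ) :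
    cfConv a n ≤ 3 := by
  cases n with
  | zero => have := h2 0; rw [cfConv_zero]; linarith
  | succ n =>
    rw [cfConv_succ]
    have hx : 1 ≤ cfConv (fun i => a (i + 1)) n :=
      one_le_cfConv (fun i => h1 (i + 1) (by omega)) n
    have : 1 / cfConv (fun i => a (i + 1)) n ≤ 1 := by
      rw [div_le_one (by linarith)]; linarith
    have := h2 0
    linarith

/-- Monotonicity of convergents: increasing in even-indexed entries,
decreasing in odd-indexed entries. -/
lemma cf_mono : ∀ (n : ℕ) (a b : ℕ → ℝ),
    (∀ i, i ≠ 0 → 1 ≤ a i) → (∀ i, i ≠ 0 → 1 ≤ b i) →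
    (∀ i, i % 2 = 0 → a i ≤ b i) → (∀ i, i % 2 = 1 → b i ≤ a i) →
    cfConv a n ≤ cfConv b n := by
  intro n
  induction n with
  | zero => intro a b _ _ he _; exact he 0 rfl
  | succ n ih =>
    intro a b ha hb he ho
    rw [cfConv_succ, cfConv_succ]
    have key : cfConv (fun i => b (i + 1)) n ≤ cfConv (fun i => a (i + 1)) n := by
      apply ih
      · intro i _; exact hb (i + 1) (by omega)
      · intro i _; exact ha (i + 1) (by omega)
      · intro i hi; exact ho (i + 1) (by omega)
      · intro i hi; exact he (i + 1) (by omega)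
    have h1 : 1 ≤ cfConv (fun i => b (i + 1)) n :=
      one_le_cfConv (fun i => hb (i + 1) (by omega)) n
    have h2 : 1 / cfConv (fun i => a (i + 1)) n ≤ 1 / cfConv (fun i => b (i + 1)) n :=
      one_div_le_one_div_of_le (by linarith) key
    have h0 : a 0 ≤ b 0 := he 0 rfl
    linarith

/-- Contraction: two convergents of good sequences agreeing on the first `2n`
entries are within `3 * (1/4)^n`, provided both depths are at least `2n`. -/
lemma cf_contract : ∀ (n : ℕ) (a b : ℕ → ℝ), GoodCF a → GoodCF b →
    (∀ i, i < 2 * n → a i = b i) → ∀ p q, 2 * n ≤ p → 2 * n ≤ q →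
    |cfConv a p - cfConv b q| ≤ 3 * (1 / 4) ^ n := by
  intro n
  induction n with
  | zero =>
    intro a b ha hb _ p q _ _
    have h1 := cfConv_nonneg ha.1 ha.2.2 p
    have h2 := cfConv_le_three ha.2.1 ha.2.2 p
    have h3 := cfConv_nonneg hb.1 hb.2.2 q
    have h4 := cfConv_le_three hb.2.1 hb.2.2 q
    rw [pow_zero, mul_one, abs_sub_le_iff]
    constructor <;> linarith
  | succ n ih =>
    intro a b ha hb hagree p q hp hq
    obtain ⟨p', rfl⟩ : ∃ p', p = p' + 2 := ⟨p - 2, by omega⟩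
    obtain ⟨q', rfl⟩ : ∃ q', q = q' + 2 := ⟨q - 2, by omega⟩
    have hx1 : 1 ≤ cfConv (fun i => a (i + 2)) p' :=
      one_le_cfConv (fun i => ha.2.2 (i + 2) (by omega)) p'
    have hy1 : 1 ≤ cfConv (fun i => b (i + 2)) q' :=
      one_le_cfConv (fun i => hb.2.2 (i + 2) (by omega)) q'
    set x := cfConv (fun i => a (i + 2)) p' with hxdef
    set y := cfConv (fun i => b (i + 2)) q' with hydef
    have ha1 : 1 ≤ a 1 := ha.2.2 1 (by omega)
    have hb0 : b 0 = a 0 := (hagree 0 (by omega)).symm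
    have hb1 : b 1 = a 1 := (hagree 1 (by omega)).symm
    have hxy : |x - y| ≤ 3 * (1 / 4) ^ n := by
      apply ih (fun i => a (i + 2)) (fun i => b (i + 2))
      · exact ⟨by linarith [ha.2.2 2 (by omega)], fun i => ha.2.1 (i + 2),
          fun i _ => ha.2.2 (i + 2) (by omega)⟩
      · exact ⟨by linarith [hb.2.2 2 (by omega)], fun i => hb.2.1 (i + 2),
          fun i _ => hb.2.2 (i + 2) (by omega)⟩
      · intro i hi; exact hagree (i + 2) (by omega)
      · omega
      · omega
    have hxpos : (0 : ℝ) < x := by linarith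
    have hypos : (0 : ℝ) < y := by linarith
    have e1 : cfConv a (p' + 2) = a 0 + 1 / (a 1 + 1 / x) := rfl
    have e2 : cfConv b (q' + 2) = b 0 + 1 / (b 1 + 1 / y) := rfl
    have hd1 : (0 : ℝ) < a 1 * x + 1 := by nlinarith
    have hd2 : (0 : ℝ) < a 1 * y + 1 := by nlinarith
    have hix : (0 : ℝ) < a 1 + 1 / x := by positivity
    have hiy : (0 : ℝ) < a 1 + 1 / y := by positivity
    have e : cfConv a (p' + 2) - cfConv b (q' + 2) =
        (x - y) / ((a 1 * x + 1) * (a 1 * y + 1)) := by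
      rw [e1, e2, hb0, hb1]
      field_simp
      ring
    have h2x : (2 : ℝ) ≤ a 1 * x + 1 := by nlinarith
    have h2y : (2 : ℝ) ≤ a 1 * y + 1 := by nlinarith
    have hD4 : (4 : ℝ) ≤ (a 1 * x + 1) * (a 1 * y + 1) := by
      calc (4:ℝ) = 2 * 2 := by norm_num
        _ ≤ (a 1 * x + 1) * (a 1 * y + 1) := mul_le_mul h2x h2y (by norm_num) (by linarith)
    have step1 : |cfConv a (p' + 2) - cfConv b (q' + 2)| =
        |x - y| / ((a 1 * x + 1) * (a 1 * y + 1)) := by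
      rw [e, abs_div, abs_of_pos (by nlinarith : (0:ℝ) < (a 1 * x + 1) * (a 1 * y + 1))]
    rw [step1]
    have step2 : |x - y| / ((a 1 * x + 1) * (a 1 * y + 1)) ≤ (3 * (1 / 4) ^ n) / 4 := by
      apply div_le_div₀ (by positivity) hxy (by norm_num) hD4
    calc |x - y| / ((a 1 * x + 1) * (a 1 * y + 1)) ≤ (3 * (1 / 4) ^ n) / 4 := step2
      _ = 3 * (1 / 4) ^ (n + 1) := by ring

lemma cfConv_cauchy {a : ℕ → ℝ} (ha : GoodCF a) : CauchySeq (cfConv a) := by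
  rw [Metric.cauchySeq_iff']
  intro ε hε
  obtain ⟨n, hn⟩ : ∃ n : ℕ, (1 / 4 : ℝ) ^ n < ε / 3 :=
    exists_pow_lt_of_lt_one (by positivity) (by norm_num)
  refine ⟨2 * n, fun m hm => ?_⟩
  have := cf_contract n a a ha ha (fun i _ => rfl) m (2 * n) hm le_rfl
  rw [Real.dist_eq]
  linarith

lemma cfConv_tendsto {a : ℕ → ℝ} (ha : GoodCF a) :
    Tendsto (cfConv a) atTop (𝓝 (cfVal a)) := by
  obtain ⟨L, hL⟩ := cauchySeq_tendsto_of_complete (cfConv_cauchy ha)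
  have h : cfVal a = L := hL.limUnder_eq
  rw [h]; exact hL

lemma cfVal_mono {a b : ℕ → ℝ} (ha : GoodCF a) (hb : GoodCF b)
    (he : ∀ i, i % 2 = 0 → a i ≤ b i) (ho : ∀ i, i % 2 = 1 → b i ≤ a i) :
    cfVal a ≤ cfVal b :=
  le_of_tendsto_of_tendsto' (cfConv_tendsto ha) (cfConv_tendsto hb)
    (fun n => cf_mono n a b ha.2.2 hb.2.2 he ho)

/-- Lower bound on `λ₀(α)` for `α ∈ {1,2}^ℤ`: truncating at positions `j` (forward)
and `-k` (backward) and appending the periodic tail `\overline{2,1}` if the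
truncation index is even, and `\overline{1,2}` if it is odd, can only decrease
the value. -/
theorem lambda_zero_lower_bound (α : ℤ → ℕ) (hα : ∀ n, α n = 1 ∨ α n = 2)
    (j k : ℕ) (hj : 1 ≤ j) (hk : 1 ≤ k) :
    tailCF (fun n => (α n : ℝ)) j
        (if j % 2 = 0 then 2 else 1) (if j % 2 = 0 then 1 else 2) +
      tailCF (fun n => if n = 0 then 0 else (α (-(n : ℤ)) : ℝ)) k
        (if k % 2 = 0 then 2 else 1) (if k % 2 = 0 then 1 else 2) ≤
      lambdaVal α 0 := by
  have h1 : ∀ m : ℤ, (1 : ℝ) ≤ (α m : ℝ) ∧ (α m : ℝ) ≤ 2 := by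
    intro m; rcases hα m with h | h <;> rw [h] <;> norm_num
  simp only [lambdaVal, tailCF, zero_add, zero_sub]
  apply add_le_add
  · -- forward part
    apply cfVal_mono
    · refine ⟨?_, fun i => ?_, fun i hi => ?_⟩ <;> beta_reduce
      · rw [if_pos (Nat.zero_le j)]
        exact le_trans zero_le_one (h1 0).1
      · by_cases h : i ≤ j
        · rw [if_pos h]; exact (h1 i).2
        · rw [if_neg h]; split_ifs <;> norm_num
      · by_cases h : i ≤ j
        · rw [if_pos h]; exact (h1 i).1
        · rw [if_neg h]; split_ifs <;> norm_num
    · exact ⟨le_trans zero_le_one (h1 0).1, fun i => (h1 i).2, fun i _ => (h1 i).1⟩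
    · intro i hi
      beta_reduce
      by_cases h : i ≤ j
      · rw [if_pos h]
      · rw [if_neg h]
        by_cases hj2 : j % 2 = 0
        · have hd : (i - j) % 2 = 0 := by omega
          rw [if_neg (by omega), if_pos hj2]
          exact (h1 i).1
        · have hd : (i - j) % 2 = 1 := by omega
          rw [if_pos hd, if_neg hj2]
          exact (h1 i).1
    · intro i hi
      beta_reduce
      by_cases h : i ≤ j
      · rw [if_pos h]
      · rw [if_neg h]
        by_cases hj2 : j % 2 = 0
        · have hd : (i - j) % 2 = 1 := by omega
          rw [if_pos hd, if_pos hj2]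
          exact (h1 i).2
        · have hd : (i - j) % 2 = 0 := by omega
          rw [if_neg (by omega), if_neg hj2]
          exact (h1 i).2
  · -- backward part
    apply cfVal_mono
    · refine ⟨?_, fun i => ?_, fun i hi => ?_⟩ <;> beta_reduce
      · rw [if_pos (Nat.zero_le k), if_pos rfl]
      · by_cases h : i ≤ k
        · rw [if_pos h]
          split_ifs with h0
          · norm_num
          · exact (h1 _).2
        · rw [if_neg h]; split_ifs <;> norm_num
      · by_cases h : i ≤ k
        · rw [if_pos h, if_neg hi]
          exact (h1 _).1
        · rw [if_neg h]; split_ifs <;> norm_num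
    · refine ⟨?_, fun i => ?_, fun i hi => ?_⟩ <;> beta_reduce
      · rw [if_pos rfl]
      · split_ifs with h0
        · norm_num
        · exact (h1 _).2
      · rw [if_neg hi]
        exact (h1 _).1
    · intro i hi
      beta_reduce
      by_cases h : i ≤ k
      · rw [if_pos h]
      · have hi0 : i ≠ 0 := by omega
        rw [if_neg h, if_neg hi0]
        by_cases hk2 : k % 2 = 0
        · have hd : (i - k) % 2 = 0 := by omega
          rw [if_neg (by omega), if_pos hk2]
          exact (h1 _).1
        · have hd : (i - k) % 2 = 1 := by omega
          rw [if_pos hd, if_neg hk2]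
          exact (h1 _).1
    · intro i hi
      beta_reduce
      have hi0 : i ≠ 0 := by omega
      by_cases h : i ≤ k
      · rw [if_pos h]
      · rw [if_neg h, if_neg hi0]
        by_cases hk2 : k % 2 = 0
        · have hd : (i - k) % 2 = 1 := by omega
          rw [if_pos hd, if_pos hk2]
          exact (h1 _).2
        · have hd : (i - k) % 2 = 0 := by omega
          rw [if_neg (by omega), if_neg hk2]
          exact (h1 _).2
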